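/- Let (S_n) be a symmetric random walk on ℤ with S_0 = 0 and jumps (J_k) satisfying P(J_1 ∈ 2ℤ) < 1, let T_0 := 0, T_n := inf{k > T_{n−1} : S_k ∈ 2ℤ} (all almost surely finite), and set X_n := S_{T_n}. Then (X_n) is a symmetric random walk on 2ℤ: the increments X_1, X_2 − X_1, X_3 − X_2, … are i.i.d. random variables taking values in 2ℤ, and the distribution of X_1 is symmetric. -/

import Mathlib

open MeasureTheory Filter ProbabilityTheory

section Aux

variable {Ω : Type*} [MeasurableSpace Ω]

section RW

/-- Pattern: first return to even at exactly time `d`, with the value in `A`. -/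
def rwPat (A : Set ℤ) (d : ℕ) (j : ℕ → ℤ) : Prop :=
  (∀ m, 0 < m → m < d → ¬ (2:ℤ) ∣ ∑ i ∈ Finset.range m, j i) ∧
  (2:ℤ) ∣ ∑ i ∈ Finset.range d, j i ∧ (∑ i ∈ Finset.range d, j i) ∈ A

lemma rwPat_congr {A : Set ℤ} {d : ℕ} {j j' : ℕ → ℤ} (h : ∀ i < d, j i = j' i) :
    rwPat A d j ↔ rwPat A d j' := by
  have hs : ∀ m ≤ d, ∑ i ∈ Finset.range m, j i = ∑ i ∈ Finset.range m, j' i := by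
    intro m hm
    exact Finset.sum_congr rfl fun i hi => h i (lt_of_lt_of_le (Finset.mem_range.mp hi) hm)
  constructor
  · rintro ⟨h1, h2, h3⟩
    exact ⟨fun m hm hmd => by rw [← hs m hmd.le]; exact h1 m hm hmd,
      by rw [← hs d le_rfl]; exact h2, by rw [← hs d le_rfl]; exact h3⟩
  · rintro ⟨h1, h2, h3⟩
    exact ⟨fun m hm hmd => by rw [hs m hmd.le]; exact h1 m hm hmd,
      by rw [hs d le_rfl]; exact h2, by rw [hs d le_rfl]; exact h3⟩

lemma rwPat_neg {A : Set ℤ} {d : ℕ} {j : ℕ → ℤ} :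
    rwPat ((fun x : ℤ => -x) ⁻¹' A) d j ↔ rwPat A d (fun l => -(j l)) := by
  unfold rwPat
  simp only [Finset.sum_neg_distrib, dvd_neg, Set.mem_preimage]

/-- the set of `d`-vectors realizing the pattern -/
def rwD (A : Set ℤ) (d : ℕ) : Set (Fin d → ℤ) :=
  {v | rwPat A d (fun l => if h : l < d then v ⟨l, h⟩ else 0)}

lemma measurableSet_countable' {α : Type*} [MeasurableSpace α] [Countable α]
    [MeasurableSingletonClass α] (s : Set α) : MeasurableSet s :=
  s.to_countable.measurableSet

lemma rwD_neg (A : Set ℤ) (d : ℕ) :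
    rwD ((fun x : ℤ => -x) ⁻¹' A) d = (fun v : Fin d → ℤ => -v) ⁻¹' rwD A d := by
  ext v
  simp only [rwD, Set.mem_setOf_eq, Set.mem_preimage, rwPat_neg]
  refine rwPat_congr fun i hi => ?_
  simp [hi]

end RW
open MeasureTheory Filter ProbabilityTheory





lemma rwVec_law (P : Measure Ω) [IsProbabilityMeasure P] (J : ℕ → Ω → ℤ)
    (hmeas : ∀ k, Measurable (J k))
    (hindep : iIndepFun J P)
    (hident : ∀ k, Measure.map (J k) P = Measure.map (J 0) P)
    (f : ℤ → ℤ) (hfμ : Measure.map f (Measure.map (J 0) P) = Measure.map (J 0) P)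
    (a d : ℕ) :
    Measure.map (fun ω (i : Fin d) => f (J (a + i) ω)) P
      = Measure.pi (fun _ : Fin d => Measure.map (J 0) P) := by
  have hf : Measurable f := measurable_of_countable f
  have hμ : IsProbabilityMeasure (Measure.map (J 0) P) :=
    Measure.isProbabilityMeasure_map (hmeas 0).aemeasurable
  symm
  apply Measure.pi_eq
  intro s _
  have hV : Measurable (fun ω (i : Fin d) => f (J (a + i) ω)) :=
    measurable_pi_lambda _ fun i => hf.comp (hmeas _)
  rw [Measure.map_apply hV (MeasurableSet.univ_pi fun i => measurableSet_countable' _)]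
  classical
  set sets' : ℕ → Set ℤ := fun m =>
    if h : a ≤ m ∧ m - a < d then f ⁻¹' (s ⟨m - a, h.2⟩) else Set.univ with hsets'
  have hS : ((fun ω (i : Fin d) => f (J (a + i) ω)) ⁻¹' Set.pi Set.univ s)
      = ⋂ m ∈ Finset.image (fun i : Fin d => a + (i : ℕ)) Finset.univ, J m ⁻¹' sets' m := by
    ext ω
    simp only [Set.mem_preimage, Set.mem_univ_pi, Set.mem_iInter, Finset.mem_image,
      Finset.mem_univ, true_and]
    constructor
    · rintro h m ⟨i, rfl⟩
      have hcond : a ≤ a + (i : ℕ) ∧ a + (i : ℕ) - a < d := by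
        constructor
        · omega
        · have := i.isLt; omega
      have : sets' (a + (i : ℕ)) = f ⁻¹' (s i) := by
        simp only [hsets']
        rw [dif_pos hcond]
        exact congrArg (fun z : Fin d => f ⁻¹' s z) (Fin.ext (by simp))
      rw [this]
      exact h i
    · intro h i
      have hcond : a ≤ a + (i : ℕ) ∧ a + (i : ℕ) - a < d := by
        constructor
        · omega
        · have := i.isLt; omega
      have h2 := h (a + (i : ℕ)) ⟨i, rfl⟩
      have : sets' (a + (i : ℕ)) = f ⁻¹' (s i) := by
        simp only [hsets']
        rw [dif_pos hcond]
        exact congrArg (fun z : Fin d => f ⁻¹' s z) (Fin.ext (by simp))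
      rw [this] at h2
      exact h2
  rw [hS, hindep.measure_inter_preimage_eq_mul _ (fun i _ => measurableSet_countable' _)]
  rw [Finset.prod_image (by intro x _ y _ h; exact Fin.ext (by simp only at h; omega))]
  apply Finset.prod_congr rfl
  intro i _
  have hcond : a ≤ a + (i : ℕ) ∧ a + (i : ℕ) - a < d := by
    constructor
    · omega
    · have := i.isLt; omega
  have : sets' (a + (i : ℕ)) = f ⁻¹' (s i) := by
    simp only [hsets']
    rw [dif_pos hcond]
    exact congrArg (fun z : Fin d => f ⁻¹' s z) (Fin.ext (by simp))
  rw [this]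
  calc P (J (a + (i : ℕ)) ⁻¹' (f ⁻¹' s i))
      = Measure.map (J (a + (i : ℕ))) P (f ⁻¹' s i) := by
        rw [Measure.map_apply (hmeas _) (measurableSet_countable' _)]
    _ = Measure.map (J 0) P (f ⁻¹' s i) := by rw [hident]
    _ = Measure.map f (Measure.map (J 0) P) (s i) := by
        rw [Measure.map_apply hf (measurableSet_countable' _)]
    _ = Measure.map (J 0) P (s i) := by rw [hfμ]




/-- σ-algebra generated by the jumps with indices in `s` -/
def rwF (J : ℕ → Ω → ℤ) (s : Finset ℕ) : MeasurableSpace Ω :=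
  MeasurableSpace.comap (fun ω (i : s) => J (i : ℕ) ω) inferInstance

lemma rwF_mono (J : ℕ → Ω → ℤ) {s u : Finset ℕ} (h : s ⊆ u) : rwF J s ≤ rwF J u := by
  intro B hB
  obtain ⟨m, hm, rfl⟩ := hB
  have hr : Measurable (fun (v : {x // x ∈ u} → ℤ) => fun i : {x // x ∈ s} => v ⟨i.1, h i.2⟩) :=
    measurable_pi_lambda _ fun i => measurable_pi_apply _
  exact ⟨(fun (v : {x // x ∈ u} → ℤ) => fun i : {x // x ∈ s} => v ⟨i.1, h i.2⟩) ⁻¹' m, hr hm, rfl⟩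

lemma rwF_indep (P : Measure Ω) [IsProbabilityMeasure P] (J : ℕ → Ω → ℤ)
    (hmeas : ∀ k, Measurable (J k))
    (hindep : iIndepFun J P)
    {S T : Finset ℕ} (hST : Disjoint S T) {B1 B2 : Set Ω}
    (h1 : MeasurableSet[rwF J S] B1) (h2 : MeasurableSet[rwF J T] B2) :
    P (B1 ∩ B2) = P B1 * P B2 := by
  obtain ⟨m1, hm1, rfl⟩ := h1
  obtain ⟨m2, hm2, rfl⟩ := h2
  have h := hindep.indepFun_finset S T hST hmeas
  exact (indepFun_iff_measure_inter_preimage_eq_mul.mp h) m1 m2 hm1 hm2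

lemma rwBlocks (P : Measure Ω) [IsProbabilityMeasure P] (J : ℕ → Ω → ℤ)
    (hmeas : ∀ k, Measurable (J k))
    (hindep : iIndepFun J P)
    (t : ℕ → ℕ) (hmono : Monotone t) (C : ℕ → Set Ω)
    (hC : ∀ k, MeasurableSet[rwF J (Finset.Ico (t k) (t (k + 1)))] (C k)) :
    ∀ n, P (⋂ k ∈ Finset.range n, C k) = ∏ k ∈ Finset.range n, P (C k) := by
  intro n
  induction n with
  | zero => simp
  | succ n ih =>
    rw [Finset.range_add_one, Finset.set_biInter_insert, Finset.prod_insert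
      (by simp)]
    have hR : MeasurableSet[rwF J (Finset.Ico (t 0) (t n))] (⋂ k ∈ Finset.range n, C k) := by
      have : ∀ k ∈ Finset.range n, MeasurableSet[rwF J (Finset.Ico (t 0) (t n))] (C k) := by
        intro k hk
        have hk' := Finset.mem_range.mp hk
        refine rwF_mono J (Finset.Ico_subset_Ico (hmono (Nat.zero_le k)) (hmono hk')) _ (hC k)
      exact MeasurableSet.biInter (Finset.range n).countable_toSet this
    have hd : Disjoint (Finset.Ico (t n) (t (n + 1))) (Finset.Ico (t 0) (t n)) :=
      (Finset.Ico_disjoint_Ico_consecutive (t 0) (t n) (t (n + 1))).symm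
    rw [rwF_indep P J hmeas hindep hd (hC n) hR, ih]

/-- the block event -/
def rwEv (J : ℕ → Ω → ℤ) (A : Set ℤ) (a d : ℕ) : Set Ω :=
  {ω | rwPat A d fun l => J (a + l) ω}

lemma rwEv_mem (J : ℕ → Ω → ℤ) (A : Set ℤ) (a d : ℕ) :
    MeasurableSet[rwF J (Finset.Ico a (a + d))] (rwEv J A a d) := by
  classical
  refine ⟨{v : (Finset.Ico a (a + d) : Finset ℕ) → ℤ |
    rwPat A d (fun l => if h : a + l ∈ Finset.Ico a (a + d) then v ⟨a + l, h⟩ else 0)},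
    measurableSet_countable' _, ?_⟩
  ext ω
  simp only [Set.mem_preimage, Set.mem_setOf_eq, rwEv]
  refine rwPat_congr fun l hl => ?_
  have : a + l ∈ Finset.Ico a (a + d) := by
    rw [Finset.mem_Ico]; omega
  simp [this]

lemma rwEv_eq_preimage (J : ℕ → Ω → ℤ) (A : Set ℤ) (a d : ℕ) :
    rwEv J A a d = (fun ω (i : Fin d) => J (a + (i : ℕ)) ω) ⁻¹' rwD A d := by
  ext ω
  simp only [Set.mem_preimage, rwEv, rwD, Set.mem_setOf_eq]
  refine rwPat_congr fun l hl => ?_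
  simp [hl]

lemma rwEv_law (P : Measure Ω) [IsProbabilityMeasure P] (J : ℕ → Ω → ℤ)
    (hmeas : ∀ k, Measurable (J k))
    (hindep : iIndepFun J P)
    (hident : ∀ k, Measure.map (J k) P = Measure.map (J 0) P)
    (A : Set ℤ) (a d : ℕ) :
    P (rwEv J A a d)
      = Measure.pi (fun _ : Fin d => Measure.map (J 0) P) (rwD A d) := by
  rw [rwEv_eq_preimage]
  have hV : Measurable (fun ω (i : Fin d) => J (a + (i : ℕ)) ω) :=
    measurable_pi_lambda _ fun i => hmeas _
  rw [← Measure.map_apply hV (measurableSet_countable' _)]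
  have h0 := rwVec_law P J hmeas hindep hident id (Measure.map_id) a d
  have h1 : Measure.map (fun ω (i : Fin d) => J (a + (i : ℕ)) ω) P
      = Measure.pi (fun _ : Fin d => Measure.map (J 0) P) := h0
  rw [h1]

lemma rwEv_stationary (P : Measure Ω) [IsProbabilityMeasure P] (J : ℕ → Ω → ℤ)
    (hmeas : ∀ k, Measurable (J k))
    (hindep : iIndepFun J P)
    (hident : ∀ k, Measure.map (J k) P = Measure.map (J 0) P)
    (A : Set ℤ) (a d : ℕ) :
    P (rwEv J A a d) = P (rwEv J A 0 d) := by
  rw [rwEv_law P J hmeas hindep hident A a d, rwEv_law P J hmeas hindep hident A 0 d]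

lemma rwEv_neg (P : Measure Ω) [IsProbabilityMeasure P] (J : ℕ → Ω → ℤ)
    (hmeas : ∀ k, Measurable (J k))
    (hindep : iIndepFun J P)
    (hident : ∀ k, Measure.map (J k) P = Measure.map (J 0) P)
    (hsymm : Measure.map (J 0) P = Measure.map (fun ω => -(J 0 ω)) P)
    (A : Set ℤ) (a d : ℕ) :
    P (rwEv J ((fun x : ℤ => -x) ⁻¹' A) a d) = P (rwEv J A a d) := by
  have hnegμ : Measure.map (fun x : ℤ => -x) (Measure.map (J 0) P) = Measure.map (J 0) P := by
    rw [Measure.map_map (measurable_of_countable _) (hmeas 0)]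
    exact hsymm.symm
  have hlaw := rwVec_law P J hmeas hindep hident (fun x : ℤ => -x) hnegμ a d
  have hV : Measurable (fun ω (i : Fin d) => -(J (a + (i : ℕ)) ω)) :=
    measurable_pi_lambda _ fun i => (hmeas _).neg
  have key : rwEv J ((fun x : ℤ => -x) ⁻¹' A) a d
      = (fun ω (i : Fin d) => -(J (a + (i : ℕ)) ω)) ⁻¹' rwD A d := by
    rw [rwEv_eq_preimage, rwD_neg]
    rfl
  have hlaw' : Measure.map (fun ω (i : Fin d) => -(J (a + (i : ℕ)) ω)) P
      = Measure.pi (fun _ : Fin d => Measure.map (J 0) P) := hlaw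
  rw [key, ← Measure.map_apply hV (measurableSet_countable' _), hlaw',
    ← rwEv_law P J hmeas hindep hident A a d]



def rwS (J : ℕ → Ω → ℤ) (m : ℕ) (ω : Ω) : ℤ := ∑ i ∈ Finset.range m, J i ω

lemma rwS_block (J : ℕ → Ω → ℤ) (a m : ℕ) (ω : Ω) :
    ∑ l ∈ Finset.range m, J (a + l) ω = rwS J (a + m) ω - rwS J a ω := by
  induction m with
  | zero => simp [rwS]
  | succ m ih =>
    rw [Finset.sum_range_succ, ih]
    have : a + (m + 1) = (a + m) + 1 := by omega
    rw [this]
    unfold rwS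
    rw [Finset.sum_range_succ]
    ring

section Tlemmas

variable (J : ℕ → Ω → ℤ) (T : ℕ → Ω → ℕ∞)

lemma rwT_char
    (hTsucc : ∀ n ω, T (n + 1) ω =
      sInf {k : ℕ∞ | ∃ m : ℕ, k = (m : ℕ∞) ∧ T n ω < (m : ℕ∞) ∧
        (2 : ℤ) ∣ ∑ i ∈ Finset.range m, J i ω})
    (n : ℕ) (ω : Ω) (m : ℕ) :
    T (n + 1) ω = (m : ℕ∞) ↔
      (T n ω < (m : ℕ∞) ∧ (2:ℤ) ∣ rwS J m ω ∧
        ∀ l : ℕ, T n ω < (l : ℕ∞) → l < m → ¬ (2:ℤ) ∣ rwS J l ω) := by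
  rw [hTsucc]
  set A : Set ℕ∞ := {k : ℕ∞ | ∃ m' : ℕ, k = (m' : ℕ∞) ∧ T n ω < (m' : ℕ∞) ∧
      (2 : ℤ) ∣ ∑ i ∈ Finset.range m', J i ω} with hA
  constructor
  · intro h
    have hle : ∀ k ∈ A, (m : ℕ∞) ≤ k := fun k hk => h ▸ sInf_le hk
    have hmem : (m : ℕ∞) ∈ A := by
      by_contra hm
      have hb : ((m + 1 : ℕ) : ℕ∞) ≤ sInf A := by
        apply le_sInf
        rintro k ⟨l, rfl, hl1, hl2⟩
        have : m ≤ l := by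
          have := hle _ ⟨l, rfl, hl1, hl2⟩
          exact_mod_cast this
        rcases eq_or_lt_of_le this with h' | h'
        · exact absurd (h' ▸ (⟨l, rfl, hl1, hl2⟩ : (l : ℕ∞) ∈ A) : (m : ℕ∞) ∈ A) hm
        · exact_mod_cast Nat.succ_le_of_lt h'
      rw [h] at hb
      exact absurd hb (by exact_mod_cast Nat.not_succ_le_self m)
    obtain ⟨l, hl, h1, h2⟩ := hmem
    have hlm : l = m := by exact_mod_cast hl.symm
    rw [hlm] at h1 h2
    refine ⟨h1, h2, ?_⟩
    intro l hl1 hl2 hdvd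
    have : (m : ℕ∞) ≤ (l : ℕ∞) := hle _ ⟨l, rfl, hl1, hdvd⟩
    have : m ≤ l := by exact_mod_cast this
    omega
  · rintro ⟨h1, h2, h3⟩
    apply le_antisymm
    · exact sInf_le ⟨m, rfl, h1, h2⟩
    · apply le_sInf
      rintro k ⟨l, rfl, hl1, hl2⟩
      by_contra hc
      push_neg at hc
      have : l < m := by exact_mod_cast hc
      exact h3 l hl1 this hl2

variable
    (hT0 : ∀ ω, T 0 ω = 0)
    (hTsucc : ∀ n ω, T (n + 1) ω =
      sInf {k : ℕ∞ | ∃ m : ℕ, k = (m : ℕ∞) ∧ T n ω < (m : ℕ∞) ∧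
        (2 : ℤ) ∣ ∑ i ∈ Finset.range m, J i ω})

include hTsucc in
lemma rwT_step {n : ℕ} {ω : Ω} (h : T (n + 1) ω ≠ ⊤) :
    T n ω < T (n + 1) ω ∧ T n ω ≠ ⊤ := by
  set m := (T (n + 1) ω).toNat with hm
  have hcoe : T (n + 1) ω = (m : ℕ∞) := (ENat.coe_toNat h).symm
  have := ((rwT_char J T hTsucc n ω m).mp hcoe).1
  exact ⟨hcoe ▸ this, ne_top_of_lt this⟩

include hTsucc in
lemma rwT_ne_top_of_le {ω : Ω} : ∀ l, T l ω ≠ ⊤ → ∀ k, k ≤ l → T k ω ≠ ⊤ := by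
  intro l
  induction l with
  | zero => intro h k hk; rw [Nat.le_zero.mp hk]; exact h
  | succ l ih =>
    intro h k hk
    rcases Nat.eq_or_lt_of_le hk with h' | h'
    · subst h'; exact h
    · exact ih (rwT_step J T hTsucc h).2 k (by omega)

include hT0 hTsucc in
lemma rwT_even {n : ℕ} {ω : Ω} (h : T n ω ≠ ⊤) :
    (2:ℤ) ∣ rwS J ((T n ω).toNat) ω := by
  cases n with
  | zero => simp [hT0, rwS]
  | succ n =>
    have hcoe : T (n + 1) ω = (((T (n + 1) ω).toNat : ℕ) : ℕ∞) := (ENat.coe_toNat h).symm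
    exact ((rwT_char J T hTsucc n ω _).mp hcoe).2.1

include hTsucc in
lemma rwT_meas_coe (hmeas : ∀ k, Measurable (J k)) (hT0 : ∀ ω, T 0 ω = 0) :
    ∀ n (m : ℕ), MeasurableSet {ω | T n ω = (m : ℕ∞)} := by
  have hSmeas : ∀ m : ℕ, Measurable (rwS J m) := by
    intro m
    exact Finset.measurable_sum _ fun i _ => hmeas i
  intro n
  induction n with
  | zero =>
    intro m
    by_cases h : m = 0
    · subst h
      have : {ω | T 0 ω = ((0:ℕ) : ℕ∞)} = Set.univ := by
        ext ω; simp [hT0 ω]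
      rw [this]; exact MeasurableSet.univ
    · have : {ω | T 0 ω = (m : ℕ∞)} = ∅ := by
        ext ω
        simp only [Set.mem_setOf_eq, Set.mem_empty_iff_false, iff_false, hT0 ω]
        intro hc
        exact h (by exact_mod_cast hc.symm)
      rw [this]; exact MeasurableSet.empty
  | succ n ih =>
    intro m
    have hset : {ω | T (n+1) ω = (m : ℕ∞)} =
        ⋃ (t : ℕ) (_ : t < m), ({ω | T n ω = (t : ℕ∞)} ∩
          ((rwS J m) ⁻¹' {x | (2:ℤ) ∣ x}) ∩
          ⋂ (l : ℕ) (_ : t < l) (_ : l < m), (rwS J l) ⁻¹' {x | ¬ (2:ℤ) ∣ x}) := by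
      ext ω
      simp only [Set.mem_setOf_eq, Set.mem_iUnion, Set.mem_inter_iff, Set.mem_preimage,
        Set.mem_iInter]
      rw [rwT_char J T hTsucc n ω m]
      constructor
      · rintro ⟨h1, h2, h3⟩
        have hne : T n ω ≠ ⊤ := ne_top_of_lt h1
        set t := (T n ω).toNat with ht
        have hcoe : T n ω = (t : ℕ∞) := (ENat.coe_toNat hne).symm
        have htm : t < m := by
          rw [hcoe] at h1; exact_mod_cast h1
        refine ⟨t, htm, ⟨⟨hcoe, h2⟩, ?_⟩⟩
        intro l hl1 hl2
        exact h3 l (by rw [hcoe]; exact_mod_cast hl1) hl2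
      · rintro ⟨t, htm, ⟨⟨hcoe, h2⟩, h3⟩⟩
        refine ⟨by rw [hcoe]; exact_mod_cast htm, h2, ?_⟩
        intro l hl1 hl2
        have : t < l := by rw [hcoe] at hl1; exact_mod_cast hl1
        exact h3 l this hl2
    rw [hset]
    apply MeasurableSet.iUnion
    intro t
    apply MeasurableSet.iUnion
    intro _
    refine MeasurableSet.inter (MeasurableSet.inter (ih t) ?_) ?_
    · exact (hSmeas m) (Set.to_countable _).measurableSet
    · apply MeasurableSet.iInter; intro l
      apply MeasurableSet.iInter; intro _
      apply MeasurableSet.iInter; intro _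
      exact (hSmeas l) (Set.to_countable _).measurableSet

include hTsucc hT0 in
lemma rwT_meas_top (hmeas : ∀ k, Measurable (J k)) (n : ℕ) :
    MeasurableSet {ω | T n ω = ⊤} := by
  have : {ω | T n ω = ⊤} = (⋃ m : ℕ, {ω | T n ω = (m : ℕ∞)})ᶜ := by
    ext ω
    simp only [Set.mem_setOf_eq, Set.mem_compl_iff, Set.mem_iUnion]
    constructor
    · intro h; push_neg; intro m hc; rw [h] at hc; exact (ENat.top_ne_coe m) hc
    · intro h
      by_contra hc
      obtain ⟨m, hm⟩ := WithTop.ne_top_iff_exists.mp hc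
      exact h ⟨m, hm.symm⟩
  rw [this]
  exact (MeasurableSet.iUnion fun m => rwT_meas_coe J T hTsucc hmeas hT0 n m).compl

include hTsucc hT0 in
lemma rwX_meas (hmeas : ∀ k, Measurable (J k))
    (X : ℕ → Ω → ℤ)
    (hX : ∀ n ω, X n ω = ∑ i ∈ Finset.range ((T n ω).toNat), J i ω) (n : ℕ) :
    Measurable (X n) := by
  have hSmeas : ∀ m : ℕ, Measurable (rwS J m) := fun m =>
    Finset.measurable_sum _ fun i _ => hmeas i
  have htoNat : ∀ m : ℕ, MeasurableSet {ω | (T n ω).toNat = m} := by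
    intro m
    have : {ω | (T n ω).toNat = m} =
        {ω | T n ω = (m : ℕ∞)} ∪ (if m = 0 then {ω | T n ω = ⊤} else ∅) := by
      ext ω
      simp only [Set.mem_setOf_eq, Set.mem_union]
      constructor
      · intro h
        rcases eq_or_ne (T n ω) ⊤ with htop | hne
        · right
          have : m = 0 := by rw [htop] at h; simpa using h.symm
          simp [this, htop]
        · left; rw [← h, ENat.coe_toNat hne]
      · intro h
        rcases h with h | h
        · rw [h]; simp
        · by_cases hm : m = 0
          · simp only [hm, if_true, Set.mem_setOf_eq] at h
            rw [h, hm]; rfl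
          · simp [hm] at h
    rw [this]
    refine (rwT_meas_coe J T hTsucc hmeas hT0 n m).union ?_
    by_cases hm : m = 0
    · simpa [hm] using rwT_meas_top J T hT0 hTsucc hmeas n
    · simp [hm]
  apply measurable_to_countable'
  intro z
  have : X n ⁻¹' {z} = ⋃ m : ℕ, ({ω | (T n ω).toNat = m} ∩ (rwS J m) ⁻¹' {z}) := by
    ext ω
    simp only [Set.mem_preimage, Set.mem_singleton_iff, Set.mem_iUnion, Set.mem_inter_iff,
      Set.mem_setOf_eq, hX n ω]
    constructor
    · intro h
      exact ⟨(T n ω).toNat, rfl, h⟩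
    · rintro ⟨m, hm, h⟩
      rw [← hm] at h
      exact h
  rw [this]
  exact MeasurableSet.iUnion fun m => (htoNat m).inter ((hSmeas m) (measurableSet_singleton z))

end Tlemmas



def rwGext (n : ℕ) (g : Fin n → ℕ) : ℕ → ℕ := fun i => if h : i < n then g ⟨i, h⟩ else 0

def rwTau (n : ℕ) (g : Fin n → ℕ) : ℕ → ℕ := fun k => k + ∑ i ∈ Finset.range k, rwGext n g i

lemma rwTau_zero (n : ℕ) (g : Fin n → ℕ) : rwTau n g 0 = 0 := by simp [rwTau]

lemma rwTau_succ (n : ℕ) (g : Fin n → ℕ) (k : ℕ) :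
    rwTau n g (k + 1) = rwTau n g k + (rwGext n g k + 1) := by
  simp only [rwTau, Finset.sum_range_succ]
  omega

lemma rwTau_mono (n : ℕ) (g : Fin n → ℕ) : Monotone (rwTau n g) :=
  monotone_nat_of_le_succ fun k => by rw [rwTau_succ]; omega

section Master

variable (J : ℕ → Ω → ℤ) (T : ℕ → Ω → ℕ∞)
    (hT0 : ∀ ω, T 0 ω = 0)
    (hTsucc : ∀ n ω, T (n + 1) ω =
      sInf {k : ℕ∞ | ∃ m : ℕ, k = (m : ℕ∞) ∧ T n ω < (m : ℕ∞) ∧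
        (2 : ℤ) ∣ ∑ i ∈ Finset.range m, J i ω})

include hT0 hTsucc in
lemma rwForces (n : ℕ) (g : Fin n → ℕ) (A : ℕ → Set ℤ) (ω : Ω)
    (hω : ∀ k < n, ω ∈ rwEv J (A k) (rwTau n g k) (rwGext n g k + 1)) :
    ∀ k, k ≤ n → T k ω = ((rwTau n g k : ℕ) : ℕ∞) ∧ (2:ℤ) ∣ rwS J (rwTau n g k) ω := by
  intro k
  induction k with
  | zero =>
    intro _
    refine ⟨?_, ?_⟩
    · rw [hT0, rwTau_zero]; simp
    · rw [rwTau_zero]; simp [rwS]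
  | succ k ih =>
    intro hk1
    have hkn : k < n := by omega
    obtain ⟨hTk, hevk⟩ := ih (by omega)
    obtain ⟨h1, h2, _⟩ := hω k hkn
    have h2' : (2:ℤ) ∣ rwS J (rwTau n g k + (rwGext n g k + 1)) ω - rwS J (rwTau n g k) ω := by
      rwa [rwS_block] at h2
    have htend : rwTau n g k + (rwGext n g k + 1) = rwTau n g (k + 1) := (rwTau_succ n g k).symm
    rw [htend] at h2'
    have hev1 : (2:ℤ) ∣ rwS J (rwTau n g (k + 1)) ω := by
      have := dvd_add h2' hevk
      rwa [sub_add_cancel] at this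
    refine ⟨?_, hev1⟩
    rw [rwT_char J T hTsucc k ω]
    refine ⟨?_, hev1, ?_⟩
    · rw [hTk]
      have : rwTau n g k < rwTau n g (k + 1) := by rw [rwTau_succ]; omega
      exact_mod_cast this
    · intro l hl1 hl2 hdvd
      have hl1' : rwTau n g k < l := by
        rw [hTk] at hl1; exact_mod_cast hl1
      set m := l - rwTau n g k with hm
      have hm0 : 0 < m := by omega
      have hmlt : m < rwGext n g k + 1 := by
        rw [rwTau_succ] at hl2; omega
      have := h1 m hm0 hmlt
      apply this
      rw [rwS_block]
      have : rwTau n g k + m = l := by omega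
      rw [this]
      exact dvd_sub hdvd hevk

include hT0 hTsucc in
lemma rwMaster (X : ℕ → Ω → ℤ)
    (hX : ∀ n ω, X n ω = ∑ i ∈ Finset.range ((T n ω).toNat), J i ω)
    (n : ℕ) (A : ℕ → Set ℤ) :
    ({ω | T n ω ≠ ⊤} ∩ ⋂ k ∈ Finset.range n, {ω | X (k+1) ω - X k ω ∈ A k})
      = ⋃ g : Fin n → ℕ,
          ⋂ k ∈ Finset.range n, rwEv J (A k) (rwTau n g k) (rwGext n g k + 1) := by
  have hXS : ∀ k ω, X k ω = rwS J ((T k ω).toNat) ω := fun k ω => hX k ω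
  ext ω
  simp only [Set.mem_inter_iff, Set.mem_setOf_eq, Set.mem_iInter, Set.mem_iUnion,
    Finset.mem_range]
  constructor
  · rintro ⟨hfin, hA⟩
    have hfin' : ∀ k, k ≤ n → T k ω ≠ ⊤ := fun k hk => rwT_ne_top_of_le J T hTsucc n hfin k hk
    set t : ℕ → ℕ := fun k => (T k ω).toNat with ht
    have hcoe : ∀ k, k ≤ n → T k ω = ((t k : ℕ) : ℕ∞) := fun k hk =>
      (ENat.coe_toNat (hfin' k hk)).symm
    have hlt : ∀ k, k < n → t k < t (k + 1) := by
      intro k hk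
      have hstep := (rwT_step J T hTsucc (n := k) (ω := ω) (hfin' (k+1) (by omega))).1
      rw [hcoe k (by omega), hcoe (k+1) (by omega)] at hstep
      exact_mod_cast hstep
    set g : Fin n → ℕ := fun i => t ((i : ℕ) + 1) - t (i : ℕ) - 1 with hg
    have hgext : ∀ k, k < n → rwGext n g k = t (k + 1) - t k - 1 := by
      intro k hk
      simp only [rwGext, hk, dif_pos, hg]
    have htau : ∀ k, k ≤ n → rwTau n g k = t k := by
      intro k
      induction k with
      | zero =>
        intro _
        rw [rwTau_zero]
        have : T 0 ω = 0 := hT0 ω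
        simp [ht, this]
      | succ k ih =>
        intro hk
        rw [rwTau_succ, ih (by omega), hgext k (by omega)]
        have := hlt k (by omega)
        omega
    refine ⟨g, ?_⟩
    intro k hk
    have hchar := (rwT_char J T hTsucc k ω (t (k+1))).mp (hcoe (k+1) (by omega))
    obtain ⟨hlt', hdvd, hmin⟩ := hchar
    have hevk : (2:ℤ) ∣ rwS J (t k) ω := rwT_even J T hT0 hTsucc (hfin' k (by omega))
    have hevk1 : (2:ℤ) ∣ rwS J (t (k+1)) ω := rwT_even J T hT0 hTsucc (hfin' (k+1) (by omega))
    have hgap : rwGext n g k + 1 = t (k+1) - t k := by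
      rw [hgext k hk]
      have := hlt k hk
      omega
    have htk : rwTau n g k = t k := htau k (by omega)
    rw [htk, hgap]
    refine ⟨?_, ?_, ?_⟩
    · intro m hm0 hmd hc
      rw [rwS_block] at hc
      have h2l : (2:ℤ) ∣ rwS J (t k + m) ω := by
        have := dvd_add hc hevk
        rwa [sub_add_cancel] at this
      refine hmin (t k + m) ?_ (by omega) h2l
      rw [hcoe k (by omega)]
      exact_mod_cast (by omega : t k < t k + m)
    · rw [rwS_block]
      have : t k + (t (k+1) - t k) = t (k+1) := by have := hlt k hk; omega
      rw [this]
      exact dvd_sub hevk1 hevk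
    · rw [rwS_block]
      have : t k + (t (k+1) - t k) = t (k+1) := by have := hlt k hk; omega
      rw [this]
      have hXk : X k ω = rwS J (t k) ω := hXS k ω
      have hXk1 : X (k+1) ω = rwS J (t (k+1)) ω := hXS (k+1) ω
      rw [← hXk, ← hXk1]
      exact hA k hk
  · rintro ⟨g, hg⟩
    have hforce := rwForces J T hT0 hTsucc n g A ω (fun k hk => by
      exact hg k hk)
    refine ⟨?_, ?_⟩
    · rw [(hforce n le_rfl).1]
      exact ENat.coe_ne_top _
    · intro k hk
      have hXk : X k ω = rwS J (rwTau n g k) ω := by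
        rw [hXS k ω, (hforce k (by omega)).1]
        simp
      have hXk1 : X (k+1) ω = rwS J (rwTau n g (k+1)) ω := by
        rw [hXS (k+1) ω, (hforce (k+1) (by omega)).1]
        simp
      obtain ⟨_, _, h3⟩ := hg k hk
      rw [rwS_block] at h3
      rw [← rwTau_succ] at h3
      rwa [hXk, hXk1]

include hT0 hTsucc in
lemma rwDisjointU (n : ℕ) (A : ℕ → Set ℤ) :
    Pairwise (Function.onFun Disjoint (fun g : Fin n → ℕ =>
      ⋂ k ∈ Finset.range n, rwEv J (A k) (rwTau n g k) (rwGext n g k + 1))) := by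
  intro g g' hne
  rw [Function.onFun, Set.disjoint_left]
  intro ω hω hω'
  apply hne
  simp only [Set.mem_iInter, Finset.mem_range] at hω hω'
  have h1 := rwForces J T hT0 hTsucc n g A ω (fun k hk => hω k hk)
  have h2 := rwForces J T hT0 hTsucc n g' A ω (fun k hk => hω' k hk)
  have htau : ∀ k, k ≤ n → rwTau n g k = rwTau n g' k := by
    intro k hk
    have := (h1 k hk).1 ▸ (h2 k hk).1
    exact_mod_cast ((h1 k hk).1.symm.trans (h2 k hk).1)
  funext i
  have hi := i.isLt
  have e1 : rwGext n g (i : ℕ) = g i := by simp [rwGext, hi]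
  have e2 : rwGext n g' (i : ℕ) = g' i := by simp [rwGext, hi]
  have s1 := rwTau_succ n g (i : ℕ)
  have s2 := rwTau_succ n g' (i : ℕ)
  have k1 := htau (i : ℕ) (by omega)
  have k2 := htau ((i : ℕ) + 1) (by omega)
  omega

end Master

lemma rwTsumProd : ∀ (n : ℕ) (h : ℕ → ℕ → ENNReal),
    (∑' g : Fin n → ℕ, ∏ i : Fin n, h (i : ℕ) (g i))
      = ∏ k ∈ Finset.range n, ∑' d : ℕ, h k d := by
  intro n
  induction n with
  | zero =>
    intro h
    rw [Finset.range_zero, Finset.prod_empty]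
    rw [tsum_eq_single (fun i => i.elim0) (fun b hb => absurd (Subsingleton.elim b _) hb)]
    simp
  | succ n ih =>
    intro h
    rw [← Equiv.tsum_eq (Fin.consEquiv fun _ : Fin (n+1) => ℕ)
      (fun g : Fin (n+1) → ℕ => ∏ i : Fin (n+1), h (i : ℕ) (g i))]
    have hterm : ∀ p : ℕ × (Fin n → ℕ),
        (∏ i : Fin (n+1), h (i : ℕ) ((Fin.consEquiv fun _ : Fin (n+1) => ℕ) p i))
          = h 0 p.1 * ∏ i : Fin n, h ((i : ℕ) + 1) (p.2 i) := by
      rintro ⟨a, b⟩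
      rw [Fin.prod_univ_succ]
      simp [Fin.consEquiv]
    calc (∑' p : ℕ × (Fin n → ℕ),
            ∏ i : Fin (n+1), h (i : ℕ) ((Fin.consEquiv fun _ : Fin (n+1) => ℕ) p i))
        = ∑' p : ℕ × (Fin n → ℕ), h 0 p.1 * ∏ i : Fin n, h ((i : ℕ) + 1) (p.2 i) := by
          exact tsum_congr hterm
      _ = ∑' a : ℕ, ∑' b : Fin n → ℕ, h 0 a * ∏ i : Fin n, h ((i : ℕ) + 1) (b i) :=
          ENNReal.tsum_prod (f := fun a (b : Fin n → ℕ) => h 0 a * ∏ i : Fin n, h ((i : ℕ) + 1) (b i))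
      _ = (∑' a : ℕ, h 0 a) * ∑' b : Fin n → ℕ, ∏ i : Fin n, h ((i : ℕ) + 1) (b i) := by
          rw [← ENNReal.tsum_mul_right]
          exact tsum_congr fun a => ENNReal.tsum_mul_left
      _ = (∑' a : ℕ, h 0 a) * ∏ k ∈ Finset.range n, ∑' d : ℕ, h (k + 1) d := by
          rw [ih (fun k => h (k + 1))]
      _ = ∏ k ∈ Finset.range (n + 1), ∑' d : ℕ, h k d := by
          rw [Finset.prod_range_succ']
          ring

end Aux

/-- for a symmetric random walk on ℤ whose jump is even with
probability `< 1`, the process `X_n := S_{T_n}` of values at the successive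
(a.s. finite) visits of `S` to the even integers is a symmetric random walk on
`2ℤ`: its increments are i.i.d., take values in `2ℤ`, and `X_1` has a symmetric
distribution. -/
theorem embedded_even_walk_is_symmetric_random_walk
    {Ω : Type*} [MeasurableSpace Ω] (P : Measure Ω) [IsProbabilityMeasure P]
    (J : ℕ → Ω → ℤ) (hmeas : ∀ k, Measurable (J k))
    (hindep : iIndepFun J P)
    (hident : ∀ k, Measure.map (J k) P = Measure.map (J 0) P)
    (hsymm : Measure.map (J 0) P = Measure.map (fun ω => -(J 0 ω)) P)
    (heven : P {ω | (2 : ℤ) ∣ J 0 ω} < 1)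
    (T : ℕ → Ω → ℕ∞)
    (hT0 : ∀ ω, T 0 ω = 0)
    (hTsucc : ∀ n ω, T (n + 1) ω =
      sInf {k : ℕ∞ | ∃ m : ℕ, k = (m : ℕ∞) ∧ T n ω < (m : ℕ∞) ∧
        (2 : ℤ) ∣ ∑ i ∈ Finset.range m, J i ω})
    (hTfin : ∀ n : ℕ, P {ω | T n ω < ⊤} = 1)
    (X : ℕ → Ω → ℤ)
    (hX : ∀ n ω, X n ω = ∑ i ∈ Finset.range ((T n ω).toNat), J i ω) :
    (∀ n : ℕ, ∀ᵐ ω ∂P, (2 : ℤ) ∣ (X (n + 1) ω - X n ω)) ∧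
    iIndepFun (fun n ω => X (n + 1) ω - X n ω) P ∧
    (∀ n : ℕ, Measure.map (fun ω => X (n + 1) ω - X n ω) P
      = Measure.map (fun ω => X 1 ω) P) ∧
    Measure.map (fun ω => X 1 ω) P = Measure.map (fun ω => -(X 1 ω)) P := by

  classical
  set q : Set ℤ → ENNReal := fun A => ∑' d : ℕ, P (rwEv J A 0 (d + 1)) with hqdef
  -- basic measurability
  have hEvMeas : ∀ (A : Set ℤ) (a d : ℕ), MeasurableSet (rwEv J A a d) := by
    intro A a d
    rw [rwEv_eq_preimage]
    exact (measurable_pi_lambda _ fun i => hmeas _) (measurableSet_countable' _)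
  have hXmeas : ∀ n, Measurable (X n) := rwX_meas J T hT0 hTsucc hmeas X hX
  have hfin0 : ∀ n, P {ω | T n ω = ⊤} = 0 := by
    intro n
    have hms : MeasurableSet {ω | T n ω = ⊤} := rwT_meas_top J T hT0 hTsucc hmeas n
    have h1 : P {ω | T n ω ≠ ⊤} = 1 := by
      have : {ω | T n ω ≠ ⊤} = {ω | T n ω < ⊤} := by
        ext ω; simp [lt_top_iff_ne_top]
      rw [this]; exact hTfin n
    have hcompl : {ω | T n ω = ⊤} = {ω | T n ω ≠ ⊤}ᶜ := by ext ω; simp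
    have hms2 : MeasurableSet {ω | T n ω ≠ ⊤} := by
      have : {ω | T n ω ≠ ⊤} = {ω | T n ω = ⊤}ᶜ := by ext ω; simp
      rw [this]; exact hms.compl
    rw [hcompl, prob_compl_eq_zero_iff hms2]
    exact h1
  -- the key factorization
  have key : ∀ (n : ℕ) (A : ℕ → Set ℤ),
      P ({ω | T n ω ≠ ⊤} ∩ ⋂ k ∈ Finset.range n, {ω | X (k+1) ω - X k ω ∈ A k})
        = ∏ k ∈ Finset.range n, q (A k) := by
    intro n A
    rw [rwMaster J T hT0 hTsucc X hX n A]
    rw [measure_iUnion (rwDisjointU J T hT0 hTsucc n A)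
      (fun g => MeasurableSet.biInter (Finset.range n).countable_toSet
        fun k _ => hEvMeas _ _ _)]
    have hblock : ∀ g : Fin n → ℕ,
        P (⋂ k ∈ Finset.range n, rwEv J (A k) (rwTau n g k) (rwGext n g k + 1))
          = ∏ k ∈ Finset.range n, P (rwEv J (A k) 0 (rwGext n g k + 1)) := by
      intro g
      have hC : ∀ k, MeasurableSet[rwF J (Finset.Ico (rwTau n g k) (rwTau n g (k+1)))]
          (rwEv J (A k) (rwTau n g k) (rwGext n g k + 1)) := by
        intro k
        rw [rwTau_succ]
        exact rwEv_mem J (A k) (rwTau n g k) (rwGext n g k + 1)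
      rw [rwBlocks P J hmeas hindep (rwTau n g) (rwTau_mono n g) _ hC n]
      exact Finset.prod_congr rfl fun k _ =>
        rwEv_stationary P J hmeas hindep hident (A k) (rwTau n g k) (rwGext n g k + 1)
    rw [tsum_congr hblock]
    have hconv : ∀ g : Fin n → ℕ,
        (∏ k ∈ Finset.range n, P (rwEv J (A k) 0 (rwGext n g k + 1)))
          = ∏ i : Fin n, P (rwEv J (A (i : ℕ)) 0 (g i + 1)) := by
      intro g
      rw [← Fin.prod_univ_eq_prod_range (fun k => P (rwEv J (A k) 0 (rwGext n g k + 1))) n]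
      exact Finset.prod_congr rfl fun i _ => by
        congr 2
        simp [rwGext, i.isLt]
    rw [tsum_congr hconv]
    exact rwTsumProd n (fun k d => P (rwEv J (A k) 0 (d + 1)))
  -- drop the finiteness event
  have hjoint : ∀ (n : ℕ) (A : ℕ → Set ℤ),
      P (⋂ k ∈ Finset.range n, {ω | X (k+1) ω - X k ω ∈ A k})
        = ∏ k ∈ Finset.range n, q (A k) := by
    intro n A
    rw [← key n A, Set.inter_comm]
    rw [measure_inter_conull]
    have : {ω | T n ω ≠ ⊤}ᶜ = {ω | T n ω = ⊤} := by ext ω; simp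
    rw [this]
    exact hfin0 n
  have hX0 : ∀ ω, X 0 ω = 0 := by
    intro ω
    rw [hX 0 ω, hT0 ω]
    simp
  have hsingleX : ∀ A : Set ℤ, P {ω | X 1 ω ∈ A} = q A := by
    intro A
    have h := hjoint 1 (fun _ => A)
    rw [Finset.prod_range_one] at h
    rw [← h]
    congr 1
    ext ω
    simp [hX0 ω]
  have hq1 : q Set.univ = 1 := by
    have h := hjoint 1 (fun _ => Set.univ)
    rw [Finset.prod_range_one] at h
    rw [← h]
    have : (⋂ k ∈ Finset.range 1, {ω | X (k+1) ω - X k ω ∈ (Set.univ : Set ℤ)})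
        = Set.univ := by
      ext ω; simp
    rw [this, measure_univ]
  have hsingleZ : ∀ (i : ℕ) (A : Set ℤ), P {ω | X (i+1) ω - X i ω ∈ A} = q A := by
    intro i A
    have h := hjoint (i+1) (fun k => if k = i then A else Set.univ)
    have hset : (⋂ k ∈ Finset.range (i+1),
        {ω | X (k+1) ω - X k ω ∈ (if k = i then A else Set.univ)})
          = {ω | X (i+1) ω - X i ω ∈ A} := by
      ext ω
      simp only [Set.mem_iInter, Finset.mem_range, Set.mem_setOf_eq]
      constructor
      · intro hh
        have := hh i (by omega)
        simpa using this
      · intro hh k hk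
        by_cases hki : k = i
        · subst hki; simpa using hh
        · simp [hki]
    rw [hset] at h
    rw [h]
    have : ∀ k ∈ Finset.range (i+1), q (if k = i then A else Set.univ)
        = (if k = i then q A else 1) := by
      intro k _
      by_cases hki : k = i
      · simp [hki]
      · simp [hki, hq1]
    rw [Finset.prod_congr rfl this, Finset.prod_ite_eq' (Finset.range (i+1)) i (fun _ => q A)]
    simp
  have hgen : ∀ (S : Finset ℕ) (sets : ℕ → Set ℤ),
      P (⋂ i ∈ S, (fun ω => X (i+1) ω - X i ω) ⁻¹' sets i) = ∏ i ∈ S, q (sets i) := by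
    intro S sets
    set n : ℕ := S.sup id + 1 with hn
    have hSn : ∀ i ∈ S, i < n := fun i hi => by
      have := Finset.le_sup (f := id) hi
      simp only [id] at this
      omega
    set A' : ℕ → Set ℤ := fun k => if k ∈ S then sets k else Set.univ with hA'
    have hset : (⋂ i ∈ S, (fun ω => X (i+1) ω - X i ω) ⁻¹' sets i)
        = ⋂ k ∈ Finset.range n, {ω | X (k+1) ω - X k ω ∈ A' k} := by
      ext ω
      simp only [Set.mem_iInter, Finset.mem_range, Set.mem_preimage, Set.mem_setOf_eq]
      constructor
      · intro hh k hk
        by_cases hkS : k ∈ S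
        · rw [hA']; simp only [hkS, if_pos]; exact hh k hkS
        · rw [hA']; simp [hkS]
      · intro hh i hi
        have := hh i (hSn i hi)
        rw [hA'] at this
        simpa [hi] using this
    rw [hset, hjoint n A']
    rw [← Finset.prod_subset (fun i hi => Finset.mem_range.mpr (hSn i hi))
      (fun x _ hx => by rw [hA']; simp [hx, hq1])]
    exact Finset.prod_congr rfl fun i hi => by rw [hA']; simp [hi]
  refine ⟨?_, ?_, ?_, ?_⟩
  · -- increments are even a.s.
    intro n
    have hae : ∀ᵐ ω ∂P, T (n+1) ω ≠ ⊤ := by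
      rw [ae_iff]
      have : {ω | ¬ T (n+1) ω ≠ ⊤} = {ω | T (n+1) ω = ⊤} := by ext ω; simp
      rw [this]
      exact hfin0 (n+1)
    filter_upwards [hae] with ω hω
    have hfn : T n ω ≠ ⊤ := rwT_ne_top_of_le J T hTsucc (n+1) hω n (by omega)
    have e1 := rwT_even J T hT0 hTsucc (n := n+1) (ω := ω) hω
    have e0 := rwT_even J T hT0 hTsucc (n := n) (ω := ω) hfn
    rw [hX (n+1) ω, hX n ω]
    exact dvd_sub e1 e0
  · -- independence
    rw [iIndepFun_iff_measure_inter_preimage_eq_mul]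
    intro S sets _
    rw [hgen S sets]
    exact Finset.prod_congr rfl fun i _ => (hsingleZ i (sets i)).symm
  · -- identically distributed
    intro n
    apply Measure.ext
    intro s hs
    rw [Measure.map_apply (f := fun ω => X (n+1) ω - X n ω) ((hXmeas (n+1)).sub (hXmeas n)) hs,
      Measure.map_apply (hXmeas 1) hs]
    have lhs : P ((fun ω => X (n+1) ω - X n ω) ⁻¹' s) = q s := hsingleZ n s
    have rhs : P ((fun ω => X 1 ω) ⁻¹' s) = q s := hsingleX s
    rw [lhs, rhs]
  · -- symmetry
    apply Measure.ext
    intro s hs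
    rw [Measure.map_apply (hXmeas 1) hs, Measure.map_apply (f := fun ω => -(X 1 ω)) (hXmeas 1).neg hs]
    have h1 : P ((fun ω => X 1 ω) ⁻¹' s) = q s := hsingleX s
    have h2 : P ((fun ω => -(X 1 ω)) ⁻¹' s) = q ((fun x : ℤ => -x) ⁻¹' s) :=
      hsingleX ((fun x : ℤ => -x) ⁻¹' s)
    rw [h1, h2, hqdef]
    exact tsum_congr fun d =>
      (rwEv_neg P J hmeas hindep hident hsymm s 0 (d+1)).symm
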